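/- Let G be a finite simple graph with no isolated vertices that is (H1, H2, C6)-free and satisfies γt(G) = 2γ(G), and let {v1, ..., vk} be a minimum dominating set of G. Then the set of special vertices of G equals T(v1) ∪ ... ∪ T(vk); in particular, every minimum dominating set of G is an S(G)-set. -/

import Mathlib

open SimpleGraph

namespace TotalDom

variable {V : Type*}

/-- The closed neighborhood `N[v]` of a vertex. -/
def cnbr (G : SimpleGraph V) (v : V) : Set V := insert v (G.neighborSet v)

/-- `S` is a dominating set: every vertex outside `S` has a neighbor in `S`. -/
def IsDomSet (G : SimpleGraph V) (S : Set V) : Prop := ∀ v ∉ S, ∃ u ∈ S, G.Adj u v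

/-- `S` is a total dominating set: every vertex has a neighbor in `S`. -/
def IsTotalDomSet (G : SimpleGraph V) (S : Set V) : Prop := ∀ v : V, ∃ u ∈ S, G.Adj u v

/-- The domination number `γ(G)`. -/
noncomputable def domNum (G : SimpleGraph V) : ℕ :=
  sInf {n | ∃ S : Set V, IsDomSet G S ∧ S.ncard = n}

/-- The total domination number `γₜ(G)`. -/
noncomputable def totalDomNum (G : SimpleGraph V) : ℕ :=
  sInf {n | ∃ S : Set V, IsTotalDomSet G S ∧ S.ncard = n}

/-- A minimum dominating set (γ-set). -/
def IsMinDomSet (G : SimpleGraph V) (S : Set V) : Prop := IsDomSet G S ∧ S.ncard = domNum G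

/-- `S` is a packing: closed neighborhoods of distinct members are disjoint. -/
def IsPacking (G : SimpleGraph V) (S : Set V) : Prop :=
  S.Pairwise fun u v => Disjoint (cnbr G u) (cnbr G v)

/-- `M(v)`: neighbors of `v` having a neighbor outside `N[v]`. -/
def Mset (G : SimpleGraph V) (v : V) : Set V :=
  {u | G.Adj v u ∧ ∃ w, G.Adj u w ∧ w ∉ cnbr G v}

/-- `D(v)`: neighbors `u` of `v` that are not true twins of `v` with `N[u] ⊆ N[v]`. -/
def Dset (G : SimpleGraph V) (v : V) : Set V :=
  {u | G.Adj v u ∧ cnbr G u ≠ cnbr G v ∧ cnbr G u ⊆ cnbr G v}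

/-- `T(v)`: `v` together with its true twins. -/
def Tset (G : SimpleGraph V) (v : V) : Set V := {u | cnbr G u = cnbr G v}

/-- A non-isolated vertex `v` is special if no `u ∈ M(v)` satisfies `D(v) ⊆ N(u)`. -/
def Special (G : SimpleGraph V) (v : V) : Prop :=
  (G.neighborSet v).Nonempty ∧ ¬ ∃ u ∈ Mset G v, Dset G v ⊆ G.neighborSet u

/-- An `S(G)`-set: a set of special vertices containing exactly one vertex from each
true-twin equivalence class of special vertices. -/
def IsSGSet (G : SimpleGraph V) (S : Set V) : Prop :=
  (∀ u ∈ S, Special G u) ∧ ∀ v, Special G v → ∃! u, u ∈ S ∧ u ∈ Tset G v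

/-- `G` has no isolated vertices. -/
def NoIsolated (G : SimpleGraph V) : Prop := ∀ v : V, ∃ u, G.Adj v u

/-- `G` contains no induced copy of `H`. -/
def Free {α : Type*} (H : SimpleGraph α) (G : SimpleGraph V) : Prop := IsEmpty (H ↪g G)

/-- `H₁`: a 6-cycle plus one chord between vertices at distance two along the cycle. -/
def H1 : SimpleGraph (Fin 6) := cycleGraph 6 ⊔ fromEdgeSet {s(0, 2)}

/-- `H₂`: a 6-cycle `x₁x₂x₃x₄x₅x₆` plus the chords `x₂x₆` and `x₃x₅`. -/
def H2 : SimpleGraph (Fin 6) := cycleGraph 6 ⊔ fromEdgeSet {s(1, 5), s(2, 4)}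

/-- A leaf: a vertex of degree one. -/
def IsLeaf (G : SimpleGraph V) (v : V) : Prop := ∃! u, G.Adj v u

/-- A support vertex: a vertex adjacent to a leaf. -/
def IsSupport (G : SimpleGraph V) (v : V) : Prop := ∃ u, G.Adj v u ∧ IsLeaf G u

/-- `sup(G)`: the set of support vertices. -/
def supSet (G : SimpleGraph V) : Set V := {v | IsSupport G v}

section Aux

variable {G : SimpleGraph V}

lemma mem_cnbr {v z : V} : z ∈ cnbr G v ↔ z = v ∨ G.Adj v z := by
  simp [cnbr]

lemma self_mem_cnbr (G : SimpleGraph V) (v : V) : v ∈ cnbr G v := Set.mem_insert _ _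

lemma mem_cnbr_of_adj {v z : V} (h : G.Adj v z) : z ∈ cnbr G v := mem_cnbr.2 (Or.inr h)

lemma totalDomNum_le {T : Set V} (hT : IsTotalDomSet G T) : totalDomNum G ≤ T.ncard :=
  Nat.sInf_le ⟨T, hT, rfl⟩

lemma domNum_le {T : Set V} (hT : IsDomSet G T) : domNum G ≤ T.ncard :=
  Nat.sInf_le ⟨T, hT, rfl⟩

end Aux

/-- Auxiliary: build a graph embedding from an explicit vertex assignment. -/
def embed_of {H : SimpleGraph (Fin 6)} {G : SimpleGraph V} (q : Fin 6 → V)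
    (hinj : Function.Injective q) (hiff : ∀ i j, G.Adj (q i) (q j) ↔ H.Adj i j) : H ↪g G :=
  ⟨⟨q, hinj⟩, fun {a b} => hiff a b⟩

set_option linter.unreachableTactic false in
set_option linter.unusedTactic false in
set_option maxHeartbeats 1000000 in
/-- Any 6-cycle in an `(H₁,H₂,C₆)`-free graph whose only possible chords are the two
"short" chords `p1p5` and `p2p4` yields a contradiction. -/
lemma sixcycle {G : SimpleGraph V} (hH1 : Free H1 G) (hH2 : Free H2 G)
    (hC6 : Free (cycleGraph 6) G)
    (p0 p1 p2 p3 p4 p5 : V)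
    (d01 : p0 ≠ p1) (d02 : p0 ≠ p2) (d03 : p0 ≠ p3) (d04 : p0 ≠ p4) (d05 : p0 ≠ p5)
    (d12 : p1 ≠ p2) (d13 : p1 ≠ p3) (d14 : p1 ≠ p4) (d15 : p1 ≠ p5)
    (d23 : p2 ≠ p3) (d24 : p2 ≠ p4) (d25 : p2 ≠ p5)
    (d34 : p3 ≠ p4) (d35 : p3 ≠ p5) (d45 : p4 ≠ p5)
    (e01 : G.Adj p0 p1) (e12 : G.Adj p1 p2) (e23 : G.Adj p2 p3)
    (e34 : G.Adj p3 p4) (e45 : G.Adj p4 p5) (e05 : G.Adj p0 p5)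
    (n02 : ¬ G.Adj p0 p2) (n03 : ¬ G.Adj p0 p3) (n04 : ¬ G.Adj p0 p4)
    (n13 : ¬ G.Adj p1 p3) (n14 : ¬ G.Adj p1 p4)
    (n25 : ¬ G.Adj p2 p5) (n35 : ¬ G.Adj p3 p5) : False := by
  have irr : ∀ x : V, ¬ G.Adj x x := fun x => G.irrefl
  by_cases c15 : G.Adj p1 p5 <;> by_cases c24 : G.Adj p2 p4
  · refine hH2.elim (embed_of ![p0,p1,p2,p3,p4,p5] ?_ ?_)
    · intro i j hij
      fin_cases i <;> fin_cases j <;>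
        first
          | rfl
          | exact absurd hij d01 | exact absurd hij.symm d01
          | exact absurd hij d02 | exact absurd hij.symm d02
          | exact absurd hij d03 | exact absurd hij.symm d03
          | exact absurd hij d04 | exact absurd hij.symm d04
          | exact absurd hij d05 | exact absurd hij.symm d05
          | exact absurd hij d12 | exact absurd hij.symm d12
          | exact absurd hij d13 | exact absurd hij.symm d13
          | exact absurd hij d14 | exact absurd hij.symm d14
          | exact absurd hij d15 | exact absurd hij.symm d15
          | exact absurd hij d23 | exact absurd hij.symm d23
          | exact absurd hij d24 | exact absurd hij.symm d24
          | exact absurd hij d25 | exact absurd hij.symm d25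
          | exact absurd hij d34 | exact absurd hij.symm d34
          | exact absurd hij d35 | exact absurd hij.symm d35
          | exact absurd hij d45 | exact absurd hij.symm d45
    · intro i j
      fin_cases i <;> fin_cases j <;>
        first
          | (refine iff_of_true ?_ (by simp [H2, fromEdgeSet_adj, cycleGraph_adj] <;> decide) ;
             first
               | exact e01 | exact e01.symm | exact e12 | exact e12.symm
               | exact e23 | exact e23.symm | exact e34 | exact e34.symm
               | exact e45 | exact e45.symm | exact e05 | exact e05.symm
               | exact c15 | exact c15.symm | exact c24 | exact c24.symm)
          | (refine iff_of_false ?_ (by simp [H2, fromEdgeSet_adj, cycleGraph_adj] <;> decide) ;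
             first
               | exact irr _
               | exact n02 | exact fun hx => n02 hx.symm
               | exact n03 | exact fun hx => n03 hx.symm
               | exact n04 | exact fun hx => n04 hx.symm
               | exact n13 | exact fun hx => n13 hx.symm
               | exact n14 | exact fun hx => n14 hx.symm
               | exact n25 | exact fun hx => n25 hx.symm
               | exact n35 | exact fun hx => n35 hx.symm
               | exact c15 | exact fun hx => c15 hx.symm
               | exact c24 | exact fun hx => c24 hx.symm)
  · refine hH1.elim (embed_of ![p1,p0,p5,p4,p3,p2] ?_ ?_)
    · intro i j hij
      fin_cases i <;> fin_cases j <;>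
        first
          | rfl
          | exact absurd hij d01 | exact absurd hij.symm d01
          | exact absurd hij d02 | exact absurd hij.symm d02
          | exact absurd hij d03 | exact absurd hij.symm d03
          | exact absurd hij d04 | exact absurd hij.symm d04
          | exact absurd hij d05 | exact absurd hij.symm d05
          | exact absurd hij d12 | exact absurd hij.symm d12
          | exact absurd hij d13 | exact absurd hij.symm d13
          | exact absurd hij d14 | exact absurd hij.symm d14
          | exact absurd hij d15 | exact absurd hij.symm d15
          | exact absurd hij d23 | exact absurd hij.symm d23
          | exact absurd hij d24 | exact absurd hij.symm d24
          | exact absurd hij d25 | exact absurd hij.symm d25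
          | exact absurd hij d34 | exact absurd hij.symm d34
          | exact absurd hij d35 | exact absurd hij.symm d35
          | exact absurd hij d45 | exact absurd hij.symm d45
    · intro i j
      fin_cases i <;> fin_cases j <;>
        first
          | (refine iff_of_true ?_ (by simp [H1, fromEdgeSet_adj, cycleGraph_adj] <;> decide) ;
             first
               | exact e01 | exact e01.symm | exact e12 | exact e12.symm
               | exact e23 | exact e23.symm | exact e34 | exact e34.symm
               | exact e45 | exact e45.symm | exact e05 | exact e05.symm
               | exact c15 | exact c15.symm | exact c24 | exact c24.symm)
          | (refine iff_of_false ?_ (by simp [H1, fromEdgeSet_adj, cycleGraph_adj] <;> decide) ;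
             first
               | exact irr _
               | exact n02 | exact fun hx => n02 hx.symm
               | exact n03 | exact fun hx => n03 hx.symm
               | exact n04 | exact fun hx => n04 hx.symm
               | exact n13 | exact fun hx => n13 hx.symm
               | exact n14 | exact fun hx => n14 hx.symm
               | exact n25 | exact fun hx => n25 hx.symm
               | exact n35 | exact fun hx => n35 hx.symm
               | exact c15 | exact fun hx => c15 hx.symm
               | exact c24 | exact fun hx => c24 hx.symm)
  · refine hH1.elim (embed_of ![p2,p3,p4,p5,p0,p1] ?_ ?_)
    · intro i j hij
      fin_cases i <;> fin_cases j <;>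
        first
          | rfl
          | exact absurd hij d01 | exact absurd hij.symm d01
          | exact absurd hij d02 | exact absurd hij.symm d02
          | exact absurd hij d03 | exact absurd hij.symm d03
          | exact absurd hij d04 | exact absurd hij.symm d04
          | exact absurd hij d05 | exact absurd hij.symm d05
          | exact absurd hij d12 | exact absurd hij.symm d12
          | exact absurd hij d13 | exact absurd hij.symm d13
          | exact absurd hij d14 | exact absurd hij.symm d14
          | exact absurd hij d15 | exact absurd hij.symm d15
          | exact absurd hij d23 | exact absurd hij.symm d23
          | exact absurd hij d24 | exact absurd hij.symm d24
          | exact absurd hij d25 | exact absurd hij.symm d25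
          | exact absurd hij d34 | exact absurd hij.symm d34
          | exact absurd hij d35 | exact absurd hij.symm d35
          | exact absurd hij d45 | exact absurd hij.symm d45
    · intro i j
      fin_cases i <;> fin_cases j <;>
        first
          | (refine iff_of_true ?_ (by simp [H1, fromEdgeSet_adj, cycleGraph_adj] <;> decide) ;
             first
               | exact e01 | exact e01.symm | exact e12 | exact e12.symm
               | exact e23 | exact e23.symm | exact e34 | exact e34.symm
               | exact e45 | exact e45.symm | exact e05 | exact e05.symm
               | exact c15 | exact c15.symm | exact c24 | exact c24.symm)
          | (refine iff_of_false ?_ (by simp [H1, fromEdgeSet_adj, cycleGraph_adj] <;> decide) ;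
             first
               | exact irr _
               | exact n02 | exact fun hx => n02 hx.symm
               | exact n03 | exact fun hx => n03 hx.symm
               | exact n04 | exact fun hx => n04 hx.symm
               | exact n13 | exact fun hx => n13 hx.symm
               | exact n14 | exact fun hx => n14 hx.symm
               | exact n25 | exact fun hx => n25 hx.symm
               | exact n35 | exact fun hx => n35 hx.symm
               | exact c15 | exact fun hx => c15 hx.symm
               | exact c24 | exact fun hx => c24 hx.symm)
  · refine hC6.elim (embed_of ![p0,p1,p2,p3,p4,p5] ?_ ?_)
    · intro i j hij
      fin_cases i <;> fin_cases j <;>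
        first
          | rfl
          | exact absurd hij d01 | exact absurd hij.symm d01
          | exact absurd hij d02 | exact absurd hij.symm d02
          | exact absurd hij d03 | exact absurd hij.symm d03
          | exact absurd hij d04 | exact absurd hij.symm d04
          | exact absurd hij d05 | exact absurd hij.symm d05
          | exact absurd hij d12 | exact absurd hij.symm d12
          | exact absurd hij d13 | exact absurd hij.symm d13
          | exact absurd hij d14 | exact absurd hij.symm d14
          | exact absurd hij d15 | exact absurd hij.symm d15
          | exact absurd hij d23 | exact absurd hij.symm d23
          | exact absurd hij d24 | exact absurd hij.symm d24
          | exact absurd hij d25 | exact absurd hij.symm d25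
          | exact absurd hij d34 | exact absurd hij.symm d34
          | exact absurd hij d35 | exact absurd hij.symm d35
          | exact absurd hij d45 | exact absurd hij.symm d45
    · intro i j
      fin_cases i <;> fin_cases j <;>
        first
          | (refine iff_of_true ?_ (by simp [cycleGraph_adj] <;> decide) ;
             first
               | exact e01 | exact e01.symm | exact e12 | exact e12.symm
               | exact e23 | exact e23.symm | exact e34 | exact e34.symm
               | exact e45 | exact e45.symm | exact e05 | exact e05.symm
               | exact c15 | exact c15.symm | exact c24 | exact c24.symm)
          | (refine iff_of_false ?_ (by simp [cycleGraph_adj] <;> decide) ;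
             first
               | exact irr _
               | exact n02 | exact fun hx => n02 hx.symm
               | exact n03 | exact fun hx => n03 hx.symm
               | exact n04 | exact fun hx => n04 hx.symm
               | exact n13 | exact fun hx => n13 hx.symm
               | exact n14 | exact fun hx => n14 hx.symm
               | exact n25 | exact fun hx => n25 hx.symm
               | exact n35 | exact fun hx => n35 hx.symm
               | exact c15 | exact fun hx => c15 hx.symm
               | exact c24 | exact fun hx => c24 hx.symm)

section Main

variable [Fintype V] {G : SimpleGraph V}

/-- If `γₜ(G) = 2γ(G)`, then every minimum dominating set is a packing. -/
lemma packing_of_min (hiso : NoIsolated G) (h : totalDomNum G = 2 * domNum G)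
    {D : Set V} (hD : IsMinDomSet G D) : IsPacking G D := by
  classical
  intro a ha b hb hab
  by_contra hnd
  rw [Set.not_disjoint_iff] at hnd
  obtain ⟨z, hza, hzb⟩ := hnd
  choose f hf using hiso
  set T : Set V := (D ∪ {z}) ∪ (f '' (D \ {a, b})) with hTdef
  have hTds : IsTotalDomSet G T := by
    intro x
    by_cases hxD : x ∈ D
    · by_cases hxab : x = a ∨ x = b
      · -- `x` is `a` or `b`; `z` (or the other of `a,b`) is an adjacent member of `T`
        have key : ∀ c c' : V, c ∈ D → c' ∈ D → c ≠ c' → z ∈ cnbr G c → z ∈ cnbr G c' →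
            ∃ u ∈ T, G.Adj u c := by
          intro c c' hc hc' hcc' hzc hzc'
          rcases mem_cnbr.1 hzc with hzc1 | hzc2
          · -- z = c, hence z ∈ cnbr c' gives adjacency of c' and c
            rcases mem_cnbr.1 hzc' with hzc'1 | hzc'2
            · exact absurd (hzc1 ▸ hzc'1) hcc'
            · exact ⟨c', Or.inl (Or.inl hc'), by rw [← hzc1]; exact hzc'2⟩
          · exact ⟨z, Or.inl (Or.inr rfl), hzc2.symm⟩
        rcases hxab with hx1 | hx1
        · rw [hx1]; exact key a b ha hb hab hza hzb
        · rw [hx1]; exact key b a hb ha (Ne.symm hab) hzb hza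
      · push_neg at hxab
        refine ⟨f x, Or.inr ⟨x, ⟨hxD, ?_⟩, rfl⟩, (hf x).symm⟩
        simp [hxab.1, hxab.2]
    · obtain ⟨u, hu, huadj⟩ := hD.1 x hxD
      exact ⟨u, Or.inl (Or.inl hu), huadj⟩
  have habD : ({a, b} : Set V) ⊆ D := by
    intro t ht; rcases ht with rfl | rfl; exact ha; exact hb
  have h2le : 2 ≤ D.ncard := by
    calc 2 = ({a, b} : Set V).ncard := (Set.ncard_pair hab).symm
    _ ≤ D.ncard := Set.ncard_le_ncard habD (Set.toFinite D)
  have hcard : T.ncard ≤ 2 * D.ncard - 1 := by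
    have h1 : T.ncard ≤ (D ∪ {z}).ncard + (f '' (D \ {a, b})).ncard :=
      Set.ncard_union_le _ _
    have h2 : (D ∪ {z}).ncard ≤ D.ncard + 1 := by
      rw [Set.union_singleton]; exact Set.ncard_insert_le _ _
    have h3 : (f '' (D \ {a, b})).ncard ≤ (D \ {a, b}).ncard := Set.ncard_image_le
    have h4 : (D \ {a, b}).ncard = D.ncard - 2 := by
      rw [Set.ncard_diff habD, Set.ncard_pair hab]
    omega
  have hle := totalDomNum_le hTds
  rw [h, ← hD.2] at hle
  omega

/-- The key forbidden-subgraph lemma: two neighbours `a, b` of `v` with private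
neighbours `y1, y2` outside `N[v]` that are both adjacent to `d` must "share". -/
lemma adj_common (hH1 : Free H1 G) (hH2 : Free H2 G) (hC6 : Free (cycleGraph 6) G)
    {v d a b y1 y2 : V}
    (hva : G.Adj v a) (hvb : G.Adj v b) (hab : a ≠ b)
    (hy1 : y1 ∉ cnbr G v) (hy2 : y2 ∉ cnbr G v) (hd : d ∉ cnbr G v)
    (hay1 : G.Adj a y1) (hby2 : G.Adj b y2)
    (hdy1 : G.Adj d y1) (hdy2 : G.Adj d y2)
    (had : ¬ G.Adj a d) (hbd : ¬ G.Adj b d) :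
    y1 = y2 ∨ G.Adj a y2 ∨ G.Adj b y1 := by
  by_contra hc
  push_neg at hc
  obtain ⟨hne, hay2, hby1⟩ := hc
  have hamem : a ∈ cnbr G v := mem_cnbr_of_adj hva
  have hbmem : b ∈ cnbr G v := mem_cnbr_of_adj hvb
  refine sixcycle hH1 hH2 hC6 v a y1 d y2 b
    hva.ne (fun hh => hy1 (hh ▸ self_mem_cnbr G v)) (fun hh => hd (hh ▸ self_mem_cnbr G v))
    (fun hh => hy2 (hh ▸ self_mem_cnbr G v)) hvb.ne
    hay1.ne (fun hh => hd (hh ▸ hamem)) (fun hh => hy2 (hh ▸ hamem)) hab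
    hdy1.ne' hne (fun hh => hy1 (hh ▸ hbmem))
    hdy2.ne (fun hh => hd (hh ▸ hbmem)) (fun hh => hy2 (hh ▸ hbmem))
    hva hay1 hdy1.symm hdy2 hby2.symm hvb
    (fun hh => hy1 (mem_cnbr_of_adj hh)) (fun hh => hd (mem_cnbr_of_adj hh))
    (fun hh => hy2 (mem_cnbr_of_adj hh)) had hay2
    (fun hh => hby1 hh.symm) (fun hh => hbd hh.symm)

/-- Helly-type lemma: all members of `A ⊆ N(v)` having a neighbour in
`N(d) \ N[v]` have a common such neighbour. -/
lemma helly (hH1 : Free H1 G) (hH2 : Free H2 G) (hC6 : Free (cycleGraph 6) G)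
    {v d : V} {A : Set V}
    (hA : ∀ a ∈ A, G.Adj v a) (hd : d ∉ cnbr G v) (hnad : ∀ a ∈ A, ¬ G.Adj a d)
    (hne : ∃ a ∈ A, ∃ y, G.Adj a y ∧ y ∉ cnbr G v ∧ G.Adj d y) :
    ∃ y, G.Adj d y ∧ y ∉ cnbr G v ∧
      ∀ a ∈ A, (∃ y', G.Adj a y' ∧ y' ∉ cnbr G v ∧ G.Adj d y') → G.Adj a y := by
  classical
  set W : Set V := {y | y ∉ cnbr G v ∧ G.Adj d y ∧ ∃ a ∈ A, G.Adj a y} with hWdef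
  have hWne : W.Nonempty := by
    obtain ⟨a, haA, y, h1, h2, h3⟩ := hne
    exact ⟨y, h2, h3, a, haA, h1⟩
  obtain ⟨y0, hy0W, hy0max⟩ :=
    (Set.toFinite W).exists_maximalFor (fun y => {a ∈ A | G.Adj a y}.ncard) W hWne
  obtain ⟨hy0out, hdy0, -⟩ := hy0W
  refine ⟨y0, hdy0, hy0out, ?_⟩
  by_contra hcon
  push_neg at hcon
  obtain ⟨b, hbA, ⟨y2, hby2, hy2out, hdy2⟩, hnby0⟩ := hcon
  have hy2W : y2 ∈ W := ⟨hy2out, hdy2, b, hbA, hby2⟩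
  have hsub : {a ∈ A | G.Adj a y0} ⊂ {a ∈ A | G.Adj a y2} := by
    constructor
    · rintro a ⟨haA, hay0⟩
      refine ⟨haA, ?_⟩
      have hab : a ≠ b := fun hh => hnby0 (hh ▸ hay0)
      rcases adj_common hH1 hH2 hC6 (hA a haA) (hA b hbA) hab hy0out hy2out hd
          hay0 hby2 hdy0 hdy2 (hnad a haA) (hnad b hbA) with h1 | h2 | h3
      · exact h1 ▸ hay0
      · exact h2
      · exact absurd h3 hnby0
    · intro hss
      exact hnby0 (hss ⟨hbA, hby2⟩).2
  have hlt : {a ∈ A | G.Adj a y0}.ncard < {a ∈ A | G.Adj a y2}.ncard :=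
    Set.ncard_lt_ncard hsub (Set.toFinite _)
  exact absurd (hy0max hy2W (le_of_lt hlt)) (not_le_of_gt hlt)

/-- Every member of a minimum dominating set is special. -/
lemma special_of_mem_min (hiso : NoIsolated G) (hH1 : Free H1 G) (hH2 : Free H2 G)
    (hC6 : Free (cycleGraph 6) G) (h : totalDomNum G = 2 * domNum G)
    {D : Set V} (hD : IsMinDomSet G D) {v : V} (hv : v ∈ D) : Special G v := by
  classical
  have hpack := packing_of_min hiso h hD
  by_contra hns
  unfold Special at hns
  push_neg at hns
  obtain ⟨u, huM, huDs⟩ := hns ⟨(hiso v).choose, (hiso v).choose_spec⟩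
  obtain ⟨hvu, w0, hw0, hw0n⟩ := huM
  have hdisj : ∀ d ∈ D, d ≠ v → Disjoint (cnbr G v) (cnbr G d) :=
    fun d hd hdne => hpack hv hd (Ne.symm hdne)
  have hnotin : ∀ d ∈ D, d ≠ v → d ∉ cnbr G v := by
    intro d hd hdne hc
    exact (Set.disjoint_left.1 (hdisj d hd hdne) hc) (self_mem_cnbr G d)
  have hdom : ∀ z : V, ∃ d ∈ D, z ∈ cnbr G d := by
    intro z
    by_cases hz : z ∈ D
    · exact ⟨z, hz, self_mem_cnbr G z⟩
    · obtain ⟨d, hd, hadj⟩ := hD.1 z hz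
      exact ⟨d, hd, mem_cnbr_of_adj hadj⟩
  choose dm hdmD hdm using hdom
  have hout : ∀ y a : V, G.Adj v a → G.Adj a y → y ∉ cnbr G v →
      dm y ≠ v ∧ G.Adj (dm y) y := by
    intro y a hva hay hyout
    have h1 : dm y ≠ v := by
      intro hh
      have hdy := hdm y
      rw [hh] at hdy
      exact hyout hdy
    refine ⟨h1, ?_⟩
    rcases mem_cnbr.1 (hdm y) with h2 | h2
    · exfalso
      refine (Set.disjoint_left.1 (hdisj (dm y) (hdmD y) h1) (mem_cnbr_of_adj hva)) ?_
      rw [← h2]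
      exact mem_cnbr_of_adj hay.symm
    · exact h2
  set A : Set V := {a | G.Adj v a ∧ ∃ y, G.Adj a y ∧ y ∉ cnbr G v} with hAdef
  have hAadj : ∀ a ∈ A, G.Adj v a := fun a ha => ha.1
  have hAnad : ∀ d : V, d ∈ D → d ≠ v → ∀ a ∈ A, ¬ G.Adj a d := by
    intro d hd hdne a ha hc
    exact (Set.disjoint_left.1 (hdisj d hd hdne) (mem_cnbr_of_adj ha.1))
      (mem_cnbr_of_adj hc.symm)
  have hgex : ∀ d : V, ∃ y : V, d ∈ D → d ≠ v →
      (G.Adj d y ∧ ∀ a ∈ A, (∃ y', G.Adj a y' ∧ y' ∉ cnbr G v ∧ G.Adj d y') → G.Adj a y) := by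
    intro d
    by_cases hdD : d ∈ D
    · by_cases hdne : d = v
      · exact ⟨v, fun _ hh => absurd hdne hh⟩
      · by_cases hex : ∃ a ∈ A, ∃ y, G.Adj a y ∧ y ∉ cnbr G v ∧ G.Adj d y
        · obtain ⟨y, h1, _h2, h3⟩ :=
            helly hH1 hH2 hC6 hAadj (hnotin d hdD hdne) (hAnad d hdD hdne) hex
          exact ⟨y, fun _ _ => ⟨h1, h3⟩⟩
        · exact ⟨(hiso d).choose, fun _ _ =>
            ⟨(hiso d).choose_spec, fun a ha hw => absurd ⟨a, ha, hw⟩ hex⟩⟩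
    · exact ⟨v, fun hh _ => absurd hh hdD⟩
  choose g hg using hgex
  set T : Set V := insert u ((D \ {v}) ∪ (g '' (D \ {v}))) with hTdef
  have hAcov : ∀ a ∈ A, ∃ t ∈ T, G.Adj t a := by
    intro a ha
    obtain ⟨hva, y, hay, hyout⟩ := ha
    obtain ⟨h1, h2⟩ := hout y a hva hay hyout
    have hgd := hg (dm y) (hdmD y) h1
    have hadj : G.Adj a (g (dm y)) := hgd.2 a ⟨hva, y, hay, hyout⟩ ⟨y, hay, hyout, h2⟩
    exact ⟨g (dm y), Set.mem_insert_of_mem _ (Or.inr ⟨dm y, ⟨hdmD y, h1⟩, rfl⟩), hadj.symm⟩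
  have hTtd : IsTotalDomSet G T := by
    intro z
    by_cases hdv : dm z = v
    · have hzv : z ∈ cnbr G v := by rw [← hdv]; exact hdm z
      rcases mem_cnbr.1 hzv with rfl | hvz
      · exact ⟨u, Set.mem_insert _ _, hvu.symm⟩
      · by_cases hzu : G.Adj u z
        · exact ⟨u, Set.mem_insert _ _, hzu⟩
        · by_cases hzequ : z = u
          · exact hAcov z ⟨hvz, w0, by rw [hzequ]; exact hw0, hw0n⟩
          · by_cases hzy : ∃ y, G.Adj z y ∧ y ∉ cnbr G v
            · exact hAcov z ⟨hvz, hzy⟩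
            · exfalso
              push_neg at hzy
              have hsub : cnbr G z ⊆ cnbr G v := by
                intro t ht
                rcases mem_cnbr.1 ht with rfl | hadj
                · exact hzv
                · exact hzy t hadj
              by_cases heq : cnbr G z = cnbr G v
              · have humem : u ∈ cnbr G z := by
                  rw [heq]; exact mem_cnbr_of_adj hvu
                rcases mem_cnbr.1 humem with h5 | h5
                · exact hzequ h5.symm
                · exact hzu h5.symm
              · exact hzu (huDs ⟨hvz, heq, hsub⟩)
    · set d0 := dm z with hd0def
      by_cases hzd : z = d0
      · have hgd := hg d0 (hdmD z) hdv
        refine ⟨g d0, Set.mem_insert_of_mem _ (Or.inr ⟨d0, ⟨hdmD z, hdv⟩, rfl⟩), ?_⟩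
        rw [hzd]
        exact hgd.1.symm
      · have hadj : G.Adj (dm z) z := by
          rcases mem_cnbr.1 (hdm z) with h5 | h5
          · exact absurd h5 hzd
          · exact h5
        exact ⟨dm z, Set.mem_insert_of_mem _ (Or.inl ⟨hdmD z, hdv⟩), hadj⟩
  have h0 : 0 < D.ncard := (Set.ncard_pos (Set.toFinite D)).2 ⟨v, hv⟩
  have hTcard : T.ncard ≤ 2 * D.ncard - 1 := by
    have h1 : T.ncard ≤ ((D \ {v}) ∪ (g '' (D \ {v}))).ncard + 1 := Set.ncard_insert_le _ _
    have h2 : ((D \ {v}) ∪ (g '' (D \ {v}))).ncard ≤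
        (D \ {v}).ncard + (g '' (D \ {v})).ncard := Set.ncard_union_le _ _
    have h3 : (g '' (D \ {v})).ncard ≤ (D \ {v}).ncard := Set.ncard_image_le (Set.toFinite _)
    have h4 : (D \ {v}).ncard = D.ncard - 1 := Set.ncard_diff_singleton_of_mem hv
    omega
  have hle := totalDomNum_le hTtd
  rw [h, ← hD.2] at hle
  omega

/-- Every special vertex is a true twin of a member of any minimum dominating set. -/
lemma twin_of_special (hiso : NoIsolated G) (h : totalDomNum G = 2 * domNum G)
    {D : Set V} (hD : IsMinDomSet G D) {v : V} (hs : Special G v) :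
    ∃ d ∈ D, cnbr G v = cnbr G d := by
  classical
  have hpack := packing_of_min hiso h hD
  by_cases hvD : v ∈ D
  · exact ⟨v, hvD, rfl⟩
  obtain ⟨d, hdD, hdv⟩ := hD.1 v hvD
  refine ⟨d, hdD, ?_⟩
  by_contra hne
  by_cases hsub : cnbr G d ⊆ cnbr G v
  · obtain ⟨z, hz1, hz2⟩ := Set.exists_of_ssubset (hsub.ssubset_of_ne (Ne.symm hne))
    set D' : Set V := insert v (D \ {d}) with hD'def
    have hds : IsDomSet G D' := by
      intro x hx
      have hxv : x ≠ v := fun hh => hx (by rw [hh]; exact Set.mem_insert _ _)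
      by_cases hxD : x ∈ D
      · have hxd : x = d := by
          by_contra hxd
          exact hx (Set.mem_insert_of_mem _ ⟨hxD, hxd⟩)
        exact ⟨v, Set.mem_insert _ _, by rw [hxd]; exact hdv.symm⟩
      · obtain ⟨e, heD, headj⟩ := hD.1 x hxD
        by_cases hed : e = d
        · have hxmem : x ∈ cnbr G v := hsub (mem_cnbr_of_adj (by rw [← hed]; exact headj))
          rcases mem_cnbr.1 hxmem with h5 | h5
          · exact absurd h5 hxv
          · exact ⟨v, Set.mem_insert _ _, h5⟩
        · exact ⟨e, Set.mem_insert_of_mem _ ⟨heD, hed⟩, headj⟩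
    have hD'card : D'.ncard = domNum G := by
      have h1 : D'.ncard ≤ (D \ {d}).ncard + 1 := Set.ncard_insert_le _ _
      have h2 : (D \ {d}).ncard = D.ncard - 1 :=
        Set.ncard_diff_singleton_of_mem hdD
      have h3 : 0 < D.ncard := (Set.ncard_pos (Set.toFinite D)).2 ⟨d, hdD⟩
      have h4 := domNum_le hds
      have h5 := hD.2
      omega
    have hpack' := packing_of_min hiso h ⟨hds, hD'card⟩
    obtain ⟨d2, hd2D, hd2z⟩ : ∃ e ∈ D, z ∈ cnbr G e := by
      by_cases hzD : z ∈ D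
      · exact ⟨z, hzD, self_mem_cnbr G z⟩
      · obtain ⟨e, heD, headj⟩ := hD.1 z hzD
        exact ⟨e, heD, mem_cnbr_of_adj headj⟩
    have hd2d : d2 ≠ d := by
      intro hh; rw [hh] at hd2z; exact hz2 hd2z
    have hvd2 : v ≠ d2 := by
      intro hh; rw [← hh] at hd2D; exact hvD hd2D
    exact (Set.disjoint_left.1
      (hpack' (Set.mem_insert _ _) (Set.mem_insert_of_mem _ ⟨hd2D, hd2d⟩) hvd2) hz1) hd2z
  · obtain ⟨w, hw1, hw2⟩ := Set.not_subset.1 hsub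
    refine hs.2 ⟨d, ⟨hdv.symm, w, ?_, hw2⟩, ?_⟩
    · rcases mem_cnbr.1 hw1 with h5 | h5
      · exact absurd (by rw [h5]; exact mem_cnbr_of_adj hdv.symm) hw2
      · exact h5
    · intro x hx
      obtain ⟨hvx, hxne, hxsub⟩ := hx
      obtain ⟨e, heD, hex⟩ : ∃ e ∈ D, x ∈ cnbr G e := by
        by_cases hxD : x ∈ D
        · exact ⟨x, hxD, self_mem_cnbr G x⟩
        · obtain ⟨e', heD, headj⟩ := hD.1 x hxD
          exact ⟨e', heD, mem_cnbr_of_adj headj⟩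
      have hed : e = d := by
        by_contra hed
        have hvd' : v ∈ cnbr G d := mem_cnbr_of_adj hdv
        have hve : v ∈ cnbr G e := by
          rcases mem_cnbr.1 hex with h5 | h5
          · rw [← h5]; exact mem_cnbr_of_adj hvx.symm
          · have he1 : e ∈ cnbr G v := hxsub (mem_cnbr_of_adj h5.symm)
            rcases mem_cnbr.1 he1 with h6 | h6
            · exact absurd (by rw [← h6]; exact heD) hvD
            · exact mem_cnbr_of_adj h6.symm
        exact (Set.disjoint_left.1 (hpack heD hdD hed) hve) hvd'
      have hxd : x ∈ cnbr G d := by rw [← hed]; exact hex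
      rcases mem_cnbr.1 hxd with h5 | h5
      · exact absurd (by rw [h5] at hxsub; exact hxsub) hsub
      · exact h5

/-- Being special only depends on the closed neighbourhood (true-twin invariance). -/
lemma special_congr {a b : V} (htw : cnbr G a = cnbr G b) (hs : Special G a) :
    Special G b := by
  classical
  by_cases hab : a = b
  · rw [← hab]; exact hs
  have hba : G.Adj b a := by
    have hmem : a ∈ cnbr G b := by rw [← htw]; exact self_mem_cnbr G a
    rcases mem_cnbr.1 hmem with h5 | h5
    · exact absurd h5 hab
    · exact h5
  refine ⟨⟨a, hba⟩, ?_⟩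
  rintro ⟨u, ⟨hbu, w, hw1, hw2⟩, hDs⟩
  refine hs.2 ⟨u, ⟨?_, w, hw1, ?_⟩, ?_⟩
  · have hu : u ∈ cnbr G a := by rw [htw]; exact mem_cnbr_of_adj hbu
    rcases mem_cnbr.1 hu with h5 | h5
    · exfalso
      refine hw2 ?_
      rw [← htw]
      exact mem_cnbr_of_adj (by rw [h5] at hw1; exact hw1)
    · exact h5
  · intro hh; rw [htw] at hh; exact hw2 hh
  · intro x hx
    obtain ⟨hax, hxne, hxsub⟩ := hx
    refine hDs ⟨?_, ?_, ?_⟩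
    · have hmem : x ∈ cnbr G b := by rw [← htw]; exact mem_cnbr_of_adj hax
      rcases mem_cnbr.1 hmem with h5 | h5
      · exfalso
        refine hxne ?_
        rw [h5, ← htw]
      · exact h5
    · rw [← htw]; exact hxne
    · rw [← htw]; exact hxsub

end Main

/-- In an `(H₁,H₂,C₆)`-free graph `G` with no isolated vertices satisfying `γₜ(G) = 2γ(G)`,
for any minimum dominating set `D` the set of special vertices equals `⋃ v ∈ D, T(v)`;
in particular `D` is an `S(G)`-set. -/
theorem stmt7 {V : Type*} [Fintype V] (G : SimpleGraph V) (hiso : NoIsolated G)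
    (hH1 : Free H1 G) (hH2 : Free H2 G) (hC6 : Free (cycleGraph 6) G)
    (h : totalDomNum G = 2 * domNum G)
    (D : Set V) (hD : IsMinDomSet G D) :
    ({v | Special G v} = ⋃ x ∈ D, Tset G x) ∧ IsSGSet G D := by
  classical
  have hpack := packing_of_min hiso h hD
  have hSD : ∀ d ∈ D, Special G d := fun d hd => special_of_mem_min hiso hH1 hH2 hC6 h hD hd
  have hmain : {v | Special G v} = ⋃ x ∈ D, Tset G x := by
    ext v
    simp only [Set.mem_setOf_eq, Set.mem_iUnion, exists_prop]
    constructor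
    · intro hs
      obtain ⟨d, hdD, htw⟩ := twin_of_special hiso h hD hs
      exact ⟨d, hdD, htw⟩
    · rintro ⟨d, hdD, htw⟩
      have he : cnbr G v = cnbr G d := htw
      exact special_congr he.symm (hSD d hdD)
  refine ⟨hmain, hSD, ?_⟩
  intro v hs
  obtain ⟨d, hdD, htw⟩ := twin_of_special hiso h hD hs
  refine ⟨d, ⟨hdD, htw.symm⟩, ?_⟩
  rintro y ⟨hyD, hyT⟩
  by_contra hyd
  have h1 : cnbr G y = cnbr G d := by
    have h2 : cnbr G y = cnbr G v := hyT
    rw [h2, htw]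
  have h3 : y ∈ cnbr G d := by rw [← h1]; exact self_mem_cnbr G y
  exact (Set.disjoint_left.1 (hpack hyD hdD hyd) (self_mem_cnbr G y)) h3

end TotalDom
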